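/- Direct intention-to-treat decomposition: under Assumptions 1 and 2, E[Y | Z_i=1, Z_j=0] − E[Y | Z_i=0, Z_j=0] = E[(Y(1,0)−Y(0,0)) · 1_{(C_i ∪ SC_i) ∩ (C_j ∪ GC_j ∪ NT_j)}] + E[(Y(1,1)−Y(0,0)) · 1_{(C_i ∪ SC_i) ∩ SC_j}] + E[(Y(1,1)−Y(0,1)) · 1_{(C_i ∪ SC_i) ∩ AT_j}] + E[(Y(0,1)−Y(0,0)) · 1_{(GC_i ∪ NT_i) ∩ SC_j}] + E[(Y(1,1)−Y(1,0)) · 1_{AT_i ∩ SC_j}], where 1_A denotes the indicator of the event A (so each summand equals the corresponding conditional mean of the potential-outcome difference times the probability of the type combination). -/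

import Mathlib

open MeasureTheory ProbabilityTheory

noncomputable def bInd (b : Bool) : ℝ := if b then 1 else 0

section Aux

variable {Ω : Type*} [MeasurableSpace Ω] (P : Measure Ω) [IsProbabilityMeasure P]

lemma key_aux (Y : Bool → Bool → Ω → ℝ) (Di Dj : Bool → Bool → Ω → Bool) (ω : Ω)
    (h1 : Di false false ω ≤ Di false true ω) (h2 : Di false true ω ≤ Di true false ω)
    (h3 : Di true false ω ≤ Di true true ω)
    (h4 : Dj false false ω ≤ Dj false true ω) (h5 : Dj false true ω ≤ Dj true false ω)
    (h6 : Dj true false ω ≤ Dj true true ω) :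
    Y (Di true false ω) (Dj false true ω) ω - Y (Di false false ω) (Dj false false ω) ω
    = (Y true false ω - Y false false ω) * Set.indicator (({x | Di true false x = true ∧ Di false true x = false} ∪ {x | Di false true x = true ∧ Di false false x = false}) ∩ ({x | Dj true false x = true ∧ Dj false true x = false} ∪ {x | Dj true true x = true ∧ Dj true false x = false} ∪ {x | Dj true true x = false})) (fun _ => (1:ℝ)) ω
      + (Y true true ω - Y false false ω) * Set.indicator (({x | Di true false x = true ∧ Di false true x = false} ∪ {x | Di false true x = true ∧ Di false false x = false}) ∩ {x | Dj false true x = true ∧ Dj false false x = false}) (fun _ => (1:ℝ)) ω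
      + (Y true true ω - Y false true ω) * Set.indicator (({x | Di true false x = true ∧ Di false true x = false} ∪ {x | Di false true x = true ∧ Di false false x = false}) ∩ {x | Dj false false x = true}) (fun _ => (1:ℝ)) ω
      + (Y false true ω - Y false false ω) * Set.indicator (({x | Di true true x = true ∧ Di true false x = false} ∪ {x | Di true true x = false}) ∩ {x | Dj false true x = true ∧ Dj false false x = false}) (fun _ => (1:ℝ)) ω
      + (Y true true ω - Y true false ω) * Set.indicator ({x | Di false false x = true} ∩ {x | Dj false true x = true ∧ Dj false false x = false}) (fun _ => (1:ℝ)) ω := by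
  simp only [Set.indicator_apply, Set.mem_inter_iff, Set.mem_union, Set.mem_setOf_eq]
  revert h1 h2 h3 h4 h5 h6
  cases hA : Di false false ω <;> cases hB : Di false true ω <;> cases hC : Di true false ω <;>
    cases hD : Di true true ω <;> cases hA' : Dj false false ω <;> cases hB' : Dj false true ω <;>
    cases hC' : Dj true false ω <;> cases hD' : Dj true true ω <;>
    intro h1 h2 h3 h4 h5 h6 <;>
    first
      | exact absurd h1 (by decide)
      | exact absurd h2 (by decide)
      | exact absurd h3 (by decide)
      | exact absurd h4 (by decide)
      | exact absurd h5 (by decide)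
      | exact absurd h6 (by decide)
      | norm_num

lemma obs_integrable (Y : Bool → Bool → Ω → ℝ) (Di Dj : Bool → Bool → Ω → Bool)
    (hYmeas : ∀ d d', Measurable (Y d d'))
    (hYint : ∀ d d', Integrable (Y d d') P)
    (hDimeas : ∀ z z', Measurable (Di z z'))
    (hDjmeas : ∀ z z', Measurable (Dj z z')) (z z' : Bool) :
    Integrable (fun ω => Y (Di z z' ω) (Dj z' z ω) ω) P := by
  have hmeas : Measurable (fun ω => Y (Di z z' ω) (Dj z' z ω) ω) := by
    have heq : (fun ω => Y (Di z z' ω) (Dj z' z ω) ω)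
        = fun ω => if Di z z' ω then (if Dj z' z ω then Y true true ω else Y true false ω)
            else (if Dj z' z ω then Y false true ω else Y false false ω) := by
      funext ω
      cases h1 : Di z z' ω <;> cases h2 : Dj z' z ω <;> simp [h1, h2]
    rw [heq]
    have hdi : MeasurableSet {ω | Di z z' ω = true} := hDimeas z z' (measurableSet_singleton true)
    have hdj : MeasurableSet {ω | Dj z' z ω = true} := hDjmeas z' z (measurableSet_singleton true)
    exact Measurable.ite hdi (Measurable.ite hdj (hYmeas true true) (hYmeas true false))
      (Measurable.ite hdj (hYmeas false true) (hYmeas false false))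
  refine Integrable.mono' (g := fun ω => |Y true true ω| + |Y true false ω| + |Y false true ω| + |Y false false ω|)
    ((((hYint true true).abs.add (hYint true false).abs).add (hYint false true).abs).add (hYint false false).abs)
    hmeas.aestronglyMeasurable ?_
  filter_upwards with ω
  have a1 := abs_nonneg (Y true true ω)
  have a2 := abs_nonneg (Y true false ω)
  have a3 := abs_nonneg (Y false true ω)
  have a4 := abs_nonneg (Y false false ω)
  cases h1 : Di z z' ω <;> cases h2 : Dj z' z ω <;> simp only [Real.norm_eq_abs] <;> linarith

lemma cond_int_eq (Y : Bool → Bool → Ω → ℝ) (Di Dj : Bool → Bool → Ω → Bool)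
    (Zi Zj : Ω → Bool)
    (hYmeas : ∀ d d', Measurable (Y d d'))
    (hYint : ∀ d d', Integrable (Y d d') P)
    (hDimeas : ∀ z z', Measurable (Di z z'))
    (hDjmeas : ∀ z z', Measurable (Dj z z'))
    (hZi : Measurable Zi) (hZj : Measurable Zj)
    (hpos : ∀ z z', 0 < P ({x | Zi x = z} ∩ {x | Zj x = z'}))
    (hIV : IndepFun
      (fun ω => ((fun d d' => Y d d' ω),
                 (fun z z' => Di z z' ω),
                 (fun z z' => Dj z z' ω)))
      (fun ω => (Zi ω, Zj ω)) P) (z z' : Bool) :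
    (∫ ω, (Y (Di (Zi ω) (Zj ω) ω) (Dj (Zj ω) (Zi ω) ω) ω)
        ∂(P[|({x | Zi x = z} ∩ {x | Zj x = z'})]))
    = ∫ ω, Y (Di z z' ω) (Dj z' z ω) ω ∂P := by
  set s : Set Ω := {x | Zi x = z} ∩ {x | Zj x = z'} with hs_def
  have hs : MeasurableSet s :=
    (hZi (measurableSet_singleton z)).inter (hZj (measurableSet_singleton z'))
  set g : Ω → ℝ := fun ω => Y (Di z z' ω) (Dj z' z ω) ω with hg_def
  have hg_int : Integrable g P := obs_integrable P Y Di Dj hYmeas hYint hDimeas hDjmeas z z'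
  -- the indicator of s as a function of (Zi, Zj)
  set φ : Bool × Bool → ℝ := fun q => if q = (z, z') then 1 else 0 with hφ_def
  have hφ_eq : (fun ω => φ (Zi ω, Zj ω)) = s.indicator (fun _ => (1:ℝ)) := by
    funext x
    by_cases hx : x ∈ s
    · have hx1 : Zi x = z := hx.1
      have hx2 : Zj x = z' := hx.2
      simp [φ, Set.indicator_of_mem hx, Prod.ext_iff, hx1, hx2]
    · have hne : ¬((Zi x, Zj x) = (z, z')) := by
        intro hc
        rw [Prod.ext_iff] at hc
        exact hx ⟨hc.1, hc.2⟩
      simp [φ, Set.indicator_of_notMem hx, hne]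
  have hφ_int : Integrable (fun ω => φ (Zi ω, Zj ω)) P := by
    rw [hφ_eq]
    exact (integrable_const (1:ℝ)).indicator hs
  -- independence of g and the indicator
  have hindep : IndepFun g (fun ω => φ (Zi ω, Zj ω)) P := by
    have hf : Measurable (fun p : (Bool → Bool → ℝ) × (Bool → Bool → Bool) × (Bool → Bool → Bool) =>
        if p.2.1 z z' then (if p.2.2 z' z then p.1 true true else p.1 true false)
          else (if p.2.2 z' z then p.1 false true else p.1 false false)) := by
      have e1 : Measurable (fun p : (Bool → Bool → ℝ) × (Bool → Bool → Bool) × (Bool → Bool → Bool) =>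
          p.2.1 z z') :=
        Measurable.eval (Measurable.eval (measurable_fst.comp measurable_snd))
      have e2 : Measurable (fun p : (Bool → Bool → ℝ) × (Bool → Bool → Bool) × (Bool → Bool → Bool) =>
          p.2.2 z' z) :=
        Measurable.eval (Measurable.eval (measurable_snd.comp measurable_snd))
      have ey : ∀ d d', Measurable (fun p : (Bool → Bool → ℝ) × (Bool → Bool → Bool) × (Bool → Bool → Bool) =>
          p.1 d d') := fun d d' =>
        Measurable.eval (Measurable.eval measurable_fst)
      exact Measurable.ite (e1 (measurableSet_singleton true))
        (Measurable.ite (e2 (measurableSet_singleton true)) (ey true true) (ey true false))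
        (Measurable.ite (e2 (measurableSet_singleton true)) (ey false true) (ey false false))
    have hφm : Measurable φ := measurable_of_countable φ
    have := hIV.comp hf hφm
    have hgeq : g = (fun p : (Bool → Bool → ℝ) × (Bool → Bool → Bool) × (Bool → Bool → Bool) =>
        if p.2.1 z z' then (if p.2.2 z' z then p.1 true true else p.1 true false)
          else (if p.2.2 z' z then p.1 false true else p.1 false false)) ∘
        (fun ω => ((fun d d' => Y d d' ω), (fun z z' => Di z z' ω), (fun z z' => Dj z z' ω))) := by
      funext ω
      simp only [Function.comp_apply]
      cases h1 : Di z z' ω <;> cases h2 : Dj z' z ω <;> simp [g, h1, h2]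
    rw [hgeq]
    exact this
  -- main computation
  have hPs_ne_zero : P s ≠ 0 := (hpos z z').ne'
  have hPs_ne_top : P s ≠ ⊤ := measure_ne_top P s
  have htR : (P s).toReal ≠ 0 := ENNReal.toReal_ne_zero.mpr ⟨hPs_ne_zero, hPs_ne_top⟩
  rw [ProbabilityTheory.cond, integral_smul_measure]
  have hset : ∫ x in s, Y (Di (Zi x) (Zj x) x) (Dj (Zj x) (Zi x) x) x ∂P = ∫ x in s, g x ∂P := by
    apply setIntegral_congr_fun hs
    intro x hx
    obtain ⟨hx1, hx2⟩ := hx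
    simp only [Set.mem_setOf_eq] at hx1 hx2
    simp [g, hx1, hx2]
  rw [hset]
  have hsi : ∫ x in s, g x ∂P = ∫ x, g x * φ (Zi x, Zj x) ∂P := by
    rw [← integral_indicator hs]
    congr 1
    funext x
    by_cases hx : x ∈ s
    · rw [Set.indicator_of_mem hx]
      have : φ (Zi x, Zj x) = 1 := by
        have := congrFun hφ_eq x
        rwa [Set.indicator_of_mem hx] at this
      rw [this, mul_one]
    · rw [Set.indicator_of_notMem hx]
      have : φ (Zi x, Zj x) = 0 := by
        have := congrFun hφ_eq x
        rwa [Set.indicator_of_notMem hx] at this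
      rw [this, mul_zero]
  rw [hsi, show (fun x => g x * φ (Zi x, Zj x)) = g * (fun ω => φ (Zi ω, Zj ω)) from rfl,
    hindep.integral_mul_eq_mul_integral hg_int.aestronglyMeasurable hφ_int.aestronglyMeasurable]
  have hφ_val : ∫ x, φ (Zi x, Zj x) ∂P = (P s).toReal := by
    rw [hφ_eq]
    exact integral_indicator_one hs
  rw [hφ_val, ENNReal.toReal_inv, smul_eq_mul]
  field_simp

end Aux
theorem stmt_2
    {Ω : Type*} [MeasurableSpace Ω] (P : Measure Ω) [IsProbabilityMeasure P]
    (Y : Bool → Bool → Ω → ℝ) (Di Dj : Bool → Bool → Ω → Bool)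
    (Zi Zj : Ω → Bool)
    (hYmeas : ∀ d d', Measurable (Y d d'))
    (hYint : ∀ d d', Integrable (Y d d') P)
    (hDimeas : ∀ z z', Measurable (Di z z'))
    (hDjmeas : ∀ z z', Measurable (Dj z z'))
    (hZi : Measurable Zi) (hZj : Measurable Zj)
    (hpos : ∀ z z', 0 < P ({x | Zi x = z} ∩ {x | Zj x = z'}))
    (hIV : IndepFun
      (fun ω => ((fun d d' => Y d d' ω),
                 (fun z z' => Di z z' ω),
                 (fun z z' => Dj z z' ω)))
      (fun ω => (Zi ω, Zj ω)) P)
    (hmono : ∀ᵐ ω ∂P,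
      (Di false false ω ≤ Di false true ω ∧ Di false true ω ≤ Di true false ω ∧
        Di true false ω ≤ Di true true ω) ∧
      (Dj false false ω ≤ Dj false true ω ∧ Dj false true ω ≤ Dj true false ω ∧
        Dj true false ω ≤ Dj true true ω))
    :
    (∫ ω, (Y (Di (Zi ω) (Zj ω) ω) (Dj (Zj ω) (Zi ω) ω) ω) ∂(P[|({x | Zi x = true} ∩ {x | Zj x = false})])) - (∫ ω, (Y (Di (Zi ω) (Zj ω) ω) (Dj (Zj ω) (Zi ω) ω) ω) ∂(P[|({x | Zi x = false} ∩ {x | Zj x = false})]))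
    = (∫ ω, (Y true false ω - Y false false ω) * Set.indicator (({x | Di true false x = true ∧ Di false true x = false} ∪ {x | Di false true x = true ∧ Di false false x = false}) ∩ ({x | Dj true false x = true ∧ Dj false true x = false} ∪ {x | Dj true true x = true ∧ Dj true false x = false} ∪ {x | Dj true true x = false})) (fun _ => (1:ℝ)) ω ∂P)
      + (∫ ω, (Y true true ω - Y false false ω) * Set.indicator (({x | Di true false x = true ∧ Di false true x = false} ∪ {x | Di false true x = true ∧ Di false false x = false}) ∩ {x | Dj false true x = true ∧ Dj false false x = false}) (fun _ => (1:ℝ)) ω ∂P)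
      + (∫ ω, (Y true true ω - Y false true ω) * Set.indicator (({x | Di true false x = true ∧ Di false true x = false} ∪ {x | Di false true x = true ∧ Di false false x = false}) ∩ {x | Dj false false x = true}) (fun _ => (1:ℝ)) ω ∂P)
      + (∫ ω, (Y false true ω - Y false false ω) * Set.indicator (({x | Di true true x = true ∧ Di true false x = false} ∪ {x | Di true true x = false}) ∩ {x | Dj false true x = true ∧ Dj false false x = false}) (fun _ => (1:ℝ)) ω ∂P)
      + (∫ ω, (Y true true ω - Y true false ω) * Set.indicator ({x | Di false false x = true} ∩ {x | Dj false true x = true ∧ Dj false false x = false}) (fun _ => (1:ℝ)) ω ∂P) := by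
  rw [cond_int_eq P Y Di Dj Zi Zj hYmeas hYint hDimeas hDjmeas hZi hZj hpos hIV true false,
      cond_int_eq P Y Di Dj Zi Zj hYmeas hYint hDimeas hDjmeas hZi hZj hpos hIV false false]
  have hint1 := obs_integrable P Y Di Dj hYmeas hYint hDimeas hDjmeas true false
  have hint0 := obs_integrable P Y Di Dj hYmeas hYint hDimeas hDjmeas false false
  rw [← integral_sub hint1 hint0]
  set S1 : Set Ω := ({x | Di true false x = true ∧ Di false true x = false} ∪ {x | Di false true x = true ∧ Di false false x = false}) ∩ ({x | Dj true false x = true ∧ Dj false true x = false} ∪ {x | Dj true true x = true ∧ Dj true false x = false} ∪ {x | Dj true true x = false}) with hS1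
  set S2 : Set Ω := ({x | Di true false x = true ∧ Di false true x = false} ∪ {x | Di false true x = true ∧ Di false false x = false}) ∩ {x | Dj false true x = true ∧ Dj false false x = false} with hS2
  set S3 : Set Ω := ({x | Di true false x = true ∧ Di false true x = false} ∪ {x | Di false true x = true ∧ Di false false x = false}) ∩ {x | Dj false false x = true} with hS3
  set S4 : Set Ω := ({x | Di true true x = true ∧ Di true false x = false} ∪ {x | Di true true x = false}) ∩ {x | Dj false true x = true ∧ Dj false false x = false} with hS4
  set S5 : Set Ω := {x | Di false false x = true} ∩ {x | Dj false true x = true ∧ Dj false false x = false} with hS5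
  set e1 : Ω → ℝ := fun ω => (Y true false ω - Y false false ω) * S1.indicator (fun _ => (1:ℝ)) ω with he1
  set e2 : Ω → ℝ := fun ω => (Y true true ω - Y false false ω) * S2.indicator (fun _ => (1:ℝ)) ω with he2
  set e3 : Ω → ℝ := fun ω => (Y true true ω - Y false true ω) * S3.indicator (fun _ => (1:ℝ)) ω with he3
  set e4 : Ω → ℝ := fun ω => (Y false true ω - Y false false ω) * S4.indicator (fun _ => (1:ℝ)) ω with he4
  set e5 : Ω → ℝ := fun ω => (Y true true ω - Y true false ω) * S5.indicator (fun _ => (1:ℝ)) ω with he5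
  -- measurability of the type sets
  have mi : ∀ z z' b, MeasurableSet {x | Di z z' x = b} :=
    fun z z' b => hDimeas z z' (measurableSet_singleton b)
  have mj : ∀ z z' b, MeasurableSet {x | Dj z z' x = b} :=
    fun z z' b => hDjmeas z z' (measurableSet_singleton b)
  have mCi : MeasurableSet {x | Di true false x = true ∧ Di false true x = false} :=
    (mi true false true).inter (mi false true false)
  have mSCi : MeasurableSet {x | Di false true x = true ∧ Di false false x = false} :=
    (mi false true true).inter (mi false false false)
  have mGCi : MeasurableSet {x | Di true true x = true ∧ Di true false x = false} :=
    (mi true true true).inter (mi true false false)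
  have mNTi : MeasurableSet {x | Di true true x = false} := mi true true false
  have mATi : MeasurableSet {x | Di false false x = true} := mi false false true
  have mCj : MeasurableSet {x | Dj true false x = true ∧ Dj false true x = false} :=
    (mj true false true).inter (mj false true false)
  have mSCj : MeasurableSet {x | Dj false true x = true ∧ Dj false false x = false} :=
    (mj false true true).inter (mj false false false)
  have mGCj : MeasurableSet {x | Dj true true x = true ∧ Dj true false x = false} :=
    (mj true true true).inter (mj true false false)
  have mNTj : MeasurableSet {x | Dj true true x = false} := mj true true false
  have mATj : MeasurableSet {x | Dj false false x = true} := mj false false true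
  have m1 : MeasurableSet (({x | Di true false x = true ∧ Di false true x = false} ∪ {x | Di false true x = true ∧ Di false false x = false}) ∩ ({x | Dj true false x = true ∧ Dj false true x = false} ∪ {x | Dj true true x = true ∧ Dj true false x = false} ∪ {x | Dj true true x = false})) :=
    (mCi.union mSCi).inter ((mCj.union mGCj).union mNTj)
  have m2 : MeasurableSet (({x | Di true false x = true ∧ Di false true x = false} ∪ {x | Di false true x = true ∧ Di false false x = false}) ∩ {x | Dj false true x = true ∧ Dj false false x = false}) :=
    (mCi.union mSCi).inter mSCj
  have m3 : MeasurableSet (({x | Di true false x = true ∧ Di false true x = false} ∪ {x | Di false true x = true ∧ Di false false x = false}) ∩ {x | Dj false false x = true}) :=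
    (mCi.union mSCi).inter mATj
  have m4 : MeasurableSet (({x | Di true true x = true ∧ Di true false x = false} ∪ {x | Di true true x = false}) ∩ {x | Dj false true x = true ∧ Dj false false x = false}) :=
    (mGCi.union mNTi).inter mSCj
  have m5 : MeasurableSet ({x | Di false false x = true} ∩ {x | Dj false true x = true ∧ Dj false false x = false}) :=
    mATi.inter mSCj
  -- integrability of the five summands
  have hterm : ∀ (f : Ω → ℝ), Integrable f P → ∀ (S : Set Ω), MeasurableSet S →
      Integrable (fun ω => f ω * S.indicator (fun _ => (1:ℝ)) ω) P := by
    intro f hf S hS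
    have heq : (fun ω => f ω * S.indicator (fun _ => (1:ℝ)) ω) = S.indicator f := by
      funext x
      by_cases hx : x ∈ S <;>
        simp [Set.indicator_of_mem, Set.indicator_of_notMem, hx]
    rw [heq]
    exact hf.indicator hS
  have ht1 : Integrable e1 P :=
    hterm (fun ω => Y true false ω - Y false false ω) ((hYint true false).sub (hYint false false)) _ m1
  have ht2 : Integrable e2 P :=
    hterm (fun ω => Y true true ω - Y false false ω) ((hYint true true).sub (hYint false false)) _ m2
  have ht3 : Integrable e3 P :=
    hterm (fun ω => Y true true ω - Y false true ω) ((hYint true true).sub (hYint false true)) _ m3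
  have ht4 : Integrable e4 P :=
    hterm (fun ω => Y false true ω - Y false false ω) ((hYint false true).sub (hYint false false)) _ m4
  have ht5 : Integrable e5 P :=
    hterm (fun ω => Y true true ω - Y true false ω) ((hYint true true).sub (hYint true false)) _ m5
  have h12 : Integrable (fun ω => e1 ω + e2 ω) P := ht1.add ht2
  have h123 : Integrable (fun ω => e1 ω + e2 ω + e3 ω) P := h12.add ht3
  have h1234 : Integrable (fun ω => e1 ω + e2 ω + e3 ω + e4 ω) P := h123.add ht4
  have hae : (fun ω => Y (Di true false ω) (Dj false true ω) ω - Y (Di false false ω) (Dj false false ω) ω)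
      =ᵐ[P] (fun ω => e1 ω + e2 ω + e3 ω + e4 ω + e5 ω) := by
    filter_upwards [hmono] with ω h
    exact key_aux Y Di Dj ω h.1.1 h.1.2.1 h.1.2.2 h.2.1 h.2.2.1 h.2.2.2
  rw [integral_congr_ae hae, integral_add h1234 ht5, integral_add h123 ht4,
    integral_add h12 ht3, integral_add ht1 ht2]
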